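/- Consider the closed-loop system ż = A11 z + p(y), ξ̇1 = v1 − (∂V/∂ξ1)ᵀ, ξ̇2 = ξ3, ξ̇3 = v2 − (∂V/∂ξ2)ᵀ − λ ξ3, y = (ξ1, ξ2), where V(z,ξ) = V1(z + A11⁻¹ p(y)) + V2(y) + (1/2)‖ξ3‖², A11 is invertible, V1 satisfies (∂V1/∂α)·(A11 α) ≤ 0 for all α, V2 is C^1, and λ ≥ 0. Then along any C^1 solution, for all t ≥ 0, d/dt V(z(t),ξ(t)) ≤ v(t)ᵀ ẏ(t) − ‖ξ̇1(t)‖² − λ‖ξ̇2(t)‖², where v = (v1, v2). In particular the system is nonlinear negative imaginary: d/dt V ≤ vᵀ ẏ. -/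

import Mathlib

open scoped BigOperators

/-- the closed-loop system
ż = A11 z + p(y), ξ̇1 = v1 − (∂V/∂ξ1)ᵀ, ξ̇2 = ξ3, ξ̇3 = v2 − (∂V/∂ξ2)ᵀ − λξ3,
y = (ξ1,ξ2), with V(z,ξ) = V1(z + A11⁻¹p(y)) + V2(y) + (1/2)‖ξ3‖², satisfies
along any C¹ solution, for all t ≥ 0,
d/dt V ≤ vᵀẏ − ‖ξ̇1‖² − λ‖ξ̇2‖², and in particular d/dt V ≤ vᵀẏ (nonlinear NI). -/
theorem stmt1 (m p1 p2 : ℕ)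
    (A11 : Matrix (Fin m) (Fin m) ℝ) (hA : IsUnit A11.det)
    (p : ((Fin p1 → ℝ) × (Fin p2 → ℝ)) → (Fin m → ℝ)) (hpC : ContDiff ℝ 1 p)
    (hp0 : p 0 = 0)
    (V1 : (Fin m → ℝ) → ℝ) (hV1C : ContDiff ℝ 1 V1)
    (hV1dec : ∀ α : Fin m → ℝ, fderiv ℝ V1 α (A11.mulVec α) ≤ 0)
    (V2 : ((Fin p1 → ℝ) × (Fin p2 → ℝ)) → ℝ) (hV2C : ContDiff ℝ 1 V2)
    (lam : ℝ) (hlam : 0 ≤ lam)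
    (V : (Fin m → ℝ) → (Fin p1 → ℝ) → (Fin p2 → ℝ) → (Fin p2 → ℝ) → ℝ)
    (hV : ∀ z ξ1 ξ2 ξ3, V z ξ1 ξ2 ξ3 =
      V1 (z + A11⁻¹.mulVec (p (ξ1, ξ2))) + V2 (ξ1, ξ2) + (1/2) * ∑ i, (ξ3 i)^2)
    -- the gradients of V with respect to ξ1 and ξ2
    (g1 : (Fin m → ℝ) → (Fin p1 → ℝ) → (Fin p2 → ℝ) → (Fin p2 → ℝ) → (Fin p1 → ℝ))
    (hg1 : ∀ z ξ1 ξ2 ξ3 i, g1 z ξ1 ξ2 ξ3 i =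
      fderiv ℝ (fun a => V z a ξ2 ξ3) ξ1 (Pi.single i 1))
    (g2 : (Fin m → ℝ) → (Fin p1 → ℝ) → (Fin p2 → ℝ) → (Fin p2 → ℝ) → (Fin p2 → ℝ))
    (hg2 : ∀ z ξ1 ξ2 ξ3 i, g2 z ξ1 ξ2 ξ3 i =
      fderiv ℝ (fun a => V z ξ1 a ξ3) ξ2 (Pi.single i 1))
    -- a C¹ solution of the closed-loop system
    (z : ℝ → Fin m → ℝ) (ξ1 : ℝ → Fin p1 → ℝ) (ξ2 ξ3 : ℝ → Fin p2 → ℝ)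
    (v1 : ℝ → Fin p1 → ℝ) (v2 : ℝ → Fin p2 → ℝ)
    (z' : ℝ → Fin m → ℝ) (ξ1' : ℝ → Fin p1 → ℝ) (ξ2' ξ3' : ℝ → Fin p2 → ℝ)
    (hz : ∀ t, HasDerivAt z (z' t) t) (hdξ1 : ∀ t, HasDerivAt ξ1 (ξ1' t) t)
    (hdξ2 : ∀ t, HasDerivAt ξ2 (ξ2' t) t) (hdξ3 : ∀ t, HasDerivAt ξ3 (ξ3' t) t)
    (hz' : ∀ t, z' t = A11.mulVec (z t) + p (ξ1 t, ξ2 t))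
    (hξ1' : ∀ t, ξ1' t = v1 t - g1 (z t) (ξ1 t) (ξ2 t) (ξ3 t))
    (hξ2' : ∀ t, ξ2' t = ξ3 t)
    (hξ3' : ∀ t, ξ3' t = v2 t - g2 (z t) (ξ1 t) (ξ2 t) (ξ3 t) - lam • ξ3 t) :
    ∀ t : ℝ, 0 ≤ t →
      deriv (fun s => V (z s) (ξ1 s) (ξ2 s) (ξ3 s)) t ≤
        ((∑ i, v1 t i * ξ1' t i) + ∑ i, v2 t i * ξ2' t i)
          - (∑ i, (ξ1' t i)^2) - lam * ∑ i, (ξ2' t i)^2 ∧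
      deriv (fun s => V (z s) (ξ1 s) (ξ2 s) (ξ3 s)) t ≤
        (∑ i, v1 t i * ξ1' t i) + ∑ i, v2 t i * ξ2' t i := by
  intro t ht
  classical
  -- notation
  have hpdiff := hpC.differentiable one_ne_zero
  have hV1diff := hV1C.differentiable one_ne_zero
  have hV2diff := hV2C.differentiable one_ne_zero
  set yt : (Fin p1 → ℝ) × (Fin p2 → ℝ) := (ξ1 t, ξ2 t) with hyt
  set wt : Fin m → ℝ := z t + A11⁻¹.mulVec (p yt) with hwt
  set M : (Fin m → ℝ) →L[ℝ] (Fin m → ℝ) :=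
    LinearMap.toContinuousLinearMap (Matrix.mulVecLin A11⁻¹) with hMdef
  have hMapp : ∀ x, M x = A11⁻¹.mulVec x := fun x => rfl
  set Dp : ((Fin p1 → ℝ) × (Fin p2 → ℝ)) →L[ℝ] (Fin m → ℝ) := fderiv ℝ p yt with hDp
  have hpD : HasFDerivAt p Dp yt := (hpdiff yt).hasFDerivAt
  set D1 : (Fin m → ℝ) →L[ℝ] ℝ := fderiv ℝ V1 wt with hD1def
  have hD1 : HasFDerivAt V1 D1 wt := (hV1diff wt).hasFDerivAt
  set D2 : ((Fin p1 → ℝ) × (Fin p2 → ℝ)) →L[ℝ] ℝ := fderiv ℝ V2 yt with hD2def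
  have hD2 : HasFDerivAt V2 D2 yt := (hV2diff yt).hasFDerivAt
  set ι1 : (Fin p1 → ℝ) →L[ℝ] ((Fin p1 → ℝ) × (Fin p2 → ℝ)) :=
    (ContinuousLinearMap.id ℝ _).prod 0 with hι1def
  set ι2 : (Fin p2 → ℝ) →L[ℝ] ((Fin p1 → ℝ) × (Fin p2 → ℝ)) :=
    (0 : (Fin p2 → ℝ) →L[ℝ] (Fin p1 → ℝ)).prod (ContinuousLinearMap.id ℝ _) with hι2def
  have hι1app : ∀ u, ι1 u = (u, 0) := fun u => rfl
  have hι2app : ∀ u, ι2 u = (0, u) := fun u => rfl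
  set L1 : (Fin p1 → ℝ) →L[ℝ] ℝ :=
    (D1.comp (M.comp (Dp.comp ι1))) + D2.comp ι1 with hL1def
  set L2 : (Fin p2 → ℝ) →L[ℝ] ℝ :=
    (D1.comp (M.comp (Dp.comp ι2))) + D2.comp ι2 with hL2def
  -- g1 via L1
  have hg1L : ∀ i, g1 (z t) (ξ1 t) (ξ2 t) (ξ3 t) i = L1 (Pi.single i 1) := by
    intro i
    rw [hg1]
    have heq : (fun a => V (z t) a (ξ2 t) (ξ3 t)) =
        fun a => V1 (z t + A11⁻¹.mulVec (p (a, ξ2 t))) + V2 (a, ξ2 t)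
          + (1/2) * ∑ j, (ξ3 t j)^2 := by
      funext a; rw [hV]
    have hι1d : HasFDerivAt (fun a : Fin p1 → ℝ => (a, ξ2 t)) ι1 (ξ1 t) :=
      HasFDerivAt.prodMk (hasFDerivAt_id _) (hasFDerivAt_const _ _)
    have hinner : HasFDerivAt (fun a : Fin p1 → ℝ => z t + A11⁻¹.mulVec (p (a, ξ2 t)))
        (M.comp (Dp.comp ι1)) (ξ1 t) := by
      have h1 : HasFDerivAt (fun a : Fin p1 → ℝ => p (a, ξ2 t)) (Dp.comp ι1) (ξ1 t) :=
        hpD.comp (ξ1 t) hι1d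
      have h2 : HasFDerivAt (fun a : Fin p1 → ℝ => M (p (a, ξ2 t)))
          (M.comp (Dp.comp ι1)) (ξ1 t) := M.hasFDerivAt.comp (ξ1 t) h1
      simpa [hMapp] using h2.const_add (z t)
    have hmain : HasFDerivAt (fun a => V (z t) a (ξ2 t) (ξ3 t)) L1 (ξ1 t) := by
      rw [heq, hL1def]
      exact ((hD1.comp (ξ1 t) hinner).add (hD2.comp (ξ1 t) hι1d)).add_const _
    rw [hmain.fderiv]
  have hg2L : ∀ i, g2 (z t) (ξ1 t) (ξ2 t) (ξ3 t) i = L2 (Pi.single i 1) := by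
    intro i
    rw [hg2]
    have heq : (fun a => V (z t) (ξ1 t) a (ξ3 t)) =
        fun a => V1 (z t + A11⁻¹.mulVec (p (ξ1 t, a))) + V2 (ξ1 t, a)
          + (1/2) * ∑ j, (ξ3 t j)^2 := by
      funext a; rw [hV]
    have hι2d : HasFDerivAt (fun a : Fin p2 → ℝ => ((ξ1 t), a)) ι2 (ξ2 t) :=
      HasFDerivAt.prodMk (hasFDerivAt_const _ _) (hasFDerivAt_id _)
    have hinner : HasFDerivAt (fun a : Fin p2 → ℝ => z t + A11⁻¹.mulVec (p (ξ1 t, a)))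
        (M.comp (Dp.comp ι2)) (ξ2 t) := by
      have h1 : HasFDerivAt (fun a : Fin p2 → ℝ => p (ξ1 t, a)) (Dp.comp ι2) (ξ2 t) :=
        hpD.comp (ξ2 t) hι2d
      have h2 : HasFDerivAt (fun a : Fin p2 → ℝ => M (p (ξ1 t, a)))
          (M.comp (Dp.comp ι2)) (ξ2 t) := M.hasFDerivAt.comp (ξ2 t) h1
      simpa [hMapp] using h2.const_add (z t)
    have hmain : HasFDerivAt (fun a => V (z t) (ξ1 t) a (ξ3 t)) L2 (ξ2 t) := by
      rw [heq, hL2def]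
      exact ((hD1.comp (ξ2 t) hinner).add (hD2.comp (ξ2 t) hι2d)).add_const _
    rw [hmain.fderiv]
  -- linear expansion of L1, L2
  have hLsum : ∀ (n : ℕ) (L : (Fin n → ℝ) →L[ℝ] ℝ) (x : Fin n → ℝ),
      L x = ∑ i, x i * L (Pi.single i 1) := by
    intro n L x
    have h := LinearMap.pi_apply_eq_sum_univ (L : (Fin n → ℝ) →ₗ[ℝ] ℝ) x
    have hsingle : ∀ i : Fin n, (Pi.single i 1 : Fin n → ℝ) = fun j => if i = j then 1 else 0 := by
      intro i; funext j; simp [Pi.single_apply, eq_comm]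
    simp only [hsingle, smul_eq_mul]
    exact h
  -- time derivative of V along the trajectory
  have hy : HasDerivAt (fun s => (ξ1 s, ξ2 s)) (ξ1' t, ξ2' t) t := HasDerivAt.prodMk (hdξ1 t) (hdξ2 t)
  have hpy : HasDerivAt (fun s => p (ξ1 s, ξ2 s)) (Dp (ξ1' t, ξ2' t)) t :=
    hpD.comp_hasDerivAt t hy
  have hMp : HasDerivAt (fun s => A11⁻¹.mulVec (p (ξ1 s, ξ2 s))) (M (Dp (ξ1' t, ξ2' t))) t := by
    exact M.hasFDerivAt.comp_hasDerivAt t hpy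
  have hw : HasDerivAt (fun s => z s + A11⁻¹.mulVec (p (ξ1 s, ξ2 s)))
      (z' t + M (Dp (ξ1' t, ξ2' t))) t := (hz t).add hMp
  have hFV1 : HasDerivAt (fun s => V1 (z s + A11⁻¹.mulVec (p (ξ1 s, ξ2 s))))
      (D1 (z' t + M (Dp (ξ1' t, ξ2' t)))) t := hD1.comp_hasDerivAt t hw
  have hFV2 : HasDerivAt (fun s => V2 (ξ1 s, ξ2 s)) (D2 (ξ1' t, ξ2' t)) t :=
    hD2.comp_hasDerivAt t hy
  have hF3 : HasDerivAt (fun s => (1/2 : ℝ) * ∑ i, (ξ3 s i)^2)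
      ((1/2) * ∑ i, (2 : ℝ) * ξ3 t i ^ 1 * ξ3' t i) t := by
    refine HasDerivAt.const_mul _ (HasDerivAt.fun_sum fun i _ => ?_)
    have := hasDerivAt_pi.mp (hdξ3 t) i
    simpa using this.fun_pow 2
  have hF : HasDerivAt (fun s => V (z s) (ξ1 s) (ξ2 s) (ξ3 s))
      (D1 (z' t + M (Dp (ξ1' t, ξ2' t))) + D2 (ξ1' t, ξ2' t)
        + (1/2) * ∑ i, (2 : ℝ) * ξ3 t i ^ 1 * ξ3' t i) t := by
    have heq : (fun s => V (z s) (ξ1 s) (ξ2 s) (ξ3 s)) =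
        fun s => V1 (z s + A11⁻¹.mulVec (p (ξ1 s, ξ2 s))) + V2 (ξ1 s, ξ2 s)
          + (1/2) * ∑ i, (ξ3 s i)^2 := by
      funext s; rw [hV]
    rw [heq]
    exact (hFV1.add hFV2).add hF3
  rw [hF.deriv]
  -- rewrite the derivative expression
  have hzw : z' t = A11.mulVec wt := by
    rw [hz' t, hwt, Matrix.mulVec_add, Matrix.mulVec_mulVec,
      Matrix.mul_nonsing_inv _ hA, Matrix.one_mulVec]
  have hsplit : (ξ1' t, ξ2' t) = ι1 (ξ1' t) + ι2 (ξ2' t) := by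
    rw [hι1app, hι2app]; simp [Prod.ext_iff]
  have hD1split : D1 (z' t + M (Dp (ξ1' t, ξ2' t))) =
      D1 (A11.mulVec wt) + D1 (M (Dp (ι1 (ξ1' t)))) + D1 (M (Dp (ι2 (ξ2' t)))) := by
    rw [hzw, hsplit]
    simp [map_add, add_assoc]
  have hD2split : D2 (ξ1' t, ξ2' t) = D2 (ι1 (ξ1' t)) + D2 (ι2 (ξ2' t)) := by
    rw [hsplit, map_add]
  have hL1x : D1 (M (Dp (ι1 (ξ1' t)))) + D2 (ι1 (ξ1' t)) = L1 (ξ1' t) := by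
    rw [hL1def]; simp
  have hL2x : D1 (M (Dp (ι2 (ξ2' t)))) + D2 (ι2 (ξ2' t)) = L2 (ξ2' t) := by
    rw [hL2def]; simp
  have hL1val : L1 (ξ1' t) = (∑ i, v1 t i * ξ1' t i) - ∑ i, (ξ1' t i)^2 := by
    rw [hLsum p1 L1 (ξ1' t)]
    rw [← Finset.sum_sub_distrib]
    refine Finset.sum_congr rfl fun i _ => ?_
    rw [← hg1L i]
    have : g1 (z t) (ξ1 t) (ξ2 t) (ξ3 t) i = v1 t i - ξ1' t i := by
      have := congrFun (hξ1' t) i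
      simp only [Pi.sub_apply] at this
      linarith
    rw [mul_comm, this]; ring
  have hL2val : L2 (ξ2' t) = ∑ i, g2 (z t) (ξ1 t) (ξ2 t) (ξ3 t) i * ξ2' t i := by
    rw [hLsum p2 L2 (ξ2' t)]
    refine Finset.sum_congr rfl fun i _ => ?_
    rw [← hg2L i]; ring
  -- the ξ3 part
  have hxi3 : (1/2 : ℝ) * ∑ i, (2 : ℝ) * ξ3 t i ^ 1 * ξ3' t i
      = (∑ i, v2 t i * ξ2' t i) - (∑ i, g2 (z t) (ξ1 t) (ξ2 t) (ξ3 t) i * ξ2' t i)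
        - lam * ∑ i, (ξ2' t i)^2 := by
    rw [Finset.mul_sum, Finset.mul_sum, ← Finset.sum_sub_distrib, ← Finset.sum_sub_distrib]
    refine Finset.sum_congr rfl fun i _ => ?_
    have h2 : ξ2' t i = ξ3 t i := congrFun (hξ2' t) i
    have h3 : ξ3' t i = v2 t i - g2 (z t) (ξ1 t) (ξ2 t) (ξ3 t) i - lam * ξ3 t i := by
      have := congrFun (hξ3' t) i
      simpa [Pi.sub_apply, Pi.smul_apply, smul_eq_mul] using this
    rw [h2, h3]; ring
  have hkey : D1 (z' t + M (Dp (ξ1' t, ξ2' t))) + D2 (ξ1' t, ξ2' t)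
      + (1/2) * ∑ i, (2 : ℝ) * ξ3 t i ^ 1 * ξ3' t i
      = D1 (A11.mulVec wt) + (((∑ i, v1 t i * ξ1' t i) + ∑ i, v2 t i * ξ2' t i)
          - (∑ i, (ξ1' t i)^2) - lam * ∑ i, (ξ2' t i)^2) := by
    rw [hD1split, hD2split, hxi3]
    have : D1 (A11.mulVec wt) + D1 (M (Dp (ι1 (ξ1' t)))) + D1 (M (Dp (ι2 (ξ2' t))))
        + (D2 (ι1 (ξ1' t)) + D2 (ι2 (ξ2' t)))
        = D1 (A11.mulVec wt) + (D1 (M (Dp (ι1 (ξ1' t)))) + D2 (ι1 (ξ1' t)))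
          + (D1 (M (Dp (ι2 (ξ2' t)))) + D2 (ι2 (ξ2' t))) := by ring
    rw [this, hL1x, hL2x, hL1val, hL2val]
    ring
  rw [hkey]
  have hneg : D1 (A11.mulVec wt) ≤ 0 := hV1dec wt
  constructor
  · linarith
  · have h1 : (0:ℝ) ≤ ∑ i, (ξ1' t i)^2 := Finset.sum_nonneg fun i _ => sq_nonneg _
    have h2 : (0:ℝ) ≤ lam * ∑ i, (ξ2' t i)^2 :=
      mul_nonneg hlam (Finset.sum_nonneg fun i _ => sq_nonneg _)
    linarith
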